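/- Under the PMTA-to-WCFG transformation (as above), the value computed by the PMTA equals the weight computed by the grammar on every tree: W(t) = A(t) = λ·μ(t) for every tree t over the ranked alphabet Σ. -/

import Mathlib

/-- Skeletal trees over a set `Sig0` of terminal (leaf) symbols: internal
nodes carry the placeholder `?`. -/
inductive Sk (Sig0 : Type) : Type
  | leaf : Sig0 → Sk Sig0
  | node : List (Sk Sig0) → Sk Sig0

/-- Bottom-up evaluation of a skeletal tree by a multiplicity tree automaton
of dimension `d` whose transitions are given by leaf vectors `μleaf` and by
the coefficients `coef i (i₁,…,i_k)` of the multilinear maps `μ_?`. -/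
noncomputable def Sk.eval {Sig0 : Type} {d : ℕ}
    (μleaf : Sig0 → Fin d → ℝ) (coef : Fin d → List (Fin d) → ℝ) :
    Sk Sig0 → Fin d → ℝ
  | .leaf a => μleaf a
  | .node ts => fun i =>
      ∑ g : Fin ts.length → Fin d,
        coef i (List.ofFn g) *
          ∏ j : Fin ts.length, Sk.eval μleaf coef (ts.get j) (g j)
decreasing_by
  have hm : ts.get j ∈ ts := by simp
  have := List.sizeOf_lt_of_mem hm
  simp only [Sk.node.sizeOf_spec]
  omega

/-- Derivation trees of the weighted grammar extracted from a PMTA: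
`term i σ` stands for an application of the rule `V_i → σ`, and
`node i ts` for an application of the rule `V_i → V_{i₁} ⋯ V_{i_k}`. -/
inductive DT (Sig0 : Type) (d : ℕ) : Type
  | term : Fin d → Sig0 → DT Sig0 d
  | node : Fin d → List (DT Sig0 d) → DT Sig0 d

namespace DT

/-- The non-terminal `V_i` labeling the root. -/
def rootIdx {Sig0 : Type} {d : ℕ} : DT Sig0 d → Fin d
  | .term i _ => i
  | .node i _ => i

/-- The weight of a derivation tree in the extracted grammar:
`θ(V_i → σ) = μ_σ[i]` and `θ(V_i → V_{i₁}⋯V_{i_k}) = c^i_{i₁,…,i_k}`. -/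
def wt {Sig0 : Type} {d : ℕ}
    (μleaf : Sig0 → Fin d → ℝ) (coef : Fin d → List (Fin d) → ℝ) :
    DT Sig0 d → ℝ
  | .term i a => μleaf a i
  | .node i ts =>
      coef i (ts.map rootIdx) * (ts.attach.map (fun x => wt μleaf coef x.1)).prod
decreasing_by
  have := List.sizeOf_lt_of_mem x.2
  simp only [DT.node.sizeOf_spec]
  omega

/-- The skeletal form of a derivation tree. -/
def skel {Sig0 : Type} {d : ℕ} : DT Sig0 d → Sk Sig0
  | .term _ a => .leaf a
  | .node _ ts => .node (ts.attach.map (fun x => skel x.1))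
decreasing_by
  have := List.sizeOf_lt_of_mem x.2
  simp only [DT.node.sizeOf_spec]
  omega

/-- `Wnt μleaf coef i s` : the total weight of all derivation trees rooted
at the non-terminal `V_i` whose skeletal form is `s`. -/
noncomputable def Wnt {Sig0 : Type} {d : ℕ}
    (μleaf : Sig0 → Fin d → ℝ) (coef : Fin d → List (Fin d) → ℝ)
    (i : Fin d) (s : Sk Sig0) : ℝ :=
  ∑' dt : {dt : DT Sig0 d // rootIdx dt = i ∧ skel dt = s},
    wt μleaf coef (dt : DT Sig0 d)

end DT

/-- The weight the extracted grammar assigns to a skeletal tree `t`: the sum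
over all derivation trees with skeletal form `t` of the weight of the rule
`S → V_root` (which is `λ[root]`) times the weight of the tree. -/
noncomputable def Wgrammar {Sig0 : Type} {d : ℕ}
    (μleaf : Sig0 → Fin d → ℝ) (coef : Fin d → List (Fin d) → ℝ)
    (lam : Fin d → ℝ) (t : Sk Sig0) : ℝ :=
  ∑' dt : {dt : DT Sig0 d // DT.skel dt = t},
    lam (DT.rootIdx (dt : DT Sig0 d)) * DT.wt μleaf coef (dt : DT Sig0 d)

section Aux
variable {Sig0 : Type} {d : ℕ}

lemma skel_term (i : Fin d) (a : Sig0) : DT.skel (DT.term i a) = Sk.leaf a := by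
  rw [DT.skel]

lemma skel_node (i : Fin d) (cs : List (DT Sig0 d)) :
    DT.skel (DT.node i cs) = Sk.node (cs.map DT.skel) := by
  rw [DT.skel]
  congr 1
  simp [List.attach_map_val]

lemma wt_node (μleaf : Sig0 → Fin d → ℝ) (coef : Fin d → List (Fin d) → ℝ)
    (i : Fin d) (cs : List (DT Sig0 d)) :
    DT.wt μleaf coef (DT.node i cs)
      = coef i (cs.map DT.rootIdx) * (cs.map (DT.wt μleaf coef)).prod := by
  rw [DT.wt]
  congr 2
  simp [List.attach_map_val]

lemma eq_term_of_skel_leaf {a : Sig0} : ∀ dt : DT Sig0 d, DT.skel dt = Sk.leaf a →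
    dt = DT.term (DT.rootIdx dt) a := by
  intro dt h
  cases dt with
  | term i b => rw [skel_term] at h; cases h; rfl
  | node i cs => rw [skel_node] at h; cases h

lemma ofFn_cast_get {α : Type*} (cs : List α) {n : ℕ} (h : n = cs.length) :
    List.ofFn (fun j : Fin n => cs.get (Fin.cast h j)) = cs := by
  subst h; exact List.ofFn_get cs

def buildNode (ts : List (Sk Sig0))
    (p : Fin d × (∀ j : Fin ts.length, {dt : DT Sig0 d // DT.skel dt = ts.get j})) :
    {dt : DT Sig0 d // DT.skel dt = Sk.node ts} :=
  ⟨DT.node p.1 (List.ofFn fun j => (p.2 j).1), by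
    rw [skel_node, List.map_ofFn]
    congr 1
    have : (fun j : Fin ts.length => DT.skel (p.2 j).1) = fun j => ts.get j := by
      funext j; exact (p.2 j).2
    rw [Function.comp_def, this, List.ofFn_get]⟩

lemma buildNode_bijective (ts : List (Sk Sig0)) :
    Function.Bijective (buildNode (d := d) ts) := by
  constructor
  · rintro ⟨i, f⟩ ⟨i', f'⟩ h
    simp only [buildNode, Subtype.mk.injEq, DT.node.injEq] at h
    obtain ⟨hi, hf⟩ := h
    have := List.ofFn_injective hf
    refine Prod.ext hi ?_
    funext j
    exact Subtype.ext (congrFun this j)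
  · rintro ⟨dt, h⟩
    cases dt with
    | term i a => rw [skel_term] at h; cases h
    | node i cs =>
      rw [skel_node] at h
      have hmap : cs.map DT.skel = ts := by cases h; rfl
      subst hmap
      have hlen : (cs.map DT.skel).length = cs.length := by simp
      refine ⟨⟨i, fun j => ⟨cs.get (Fin.cast hlen j), ?_⟩⟩, ?_⟩
      · simp [List.get_eq_getElem]
      · apply Subtype.ext
        simp only [buildNode]
        rw [ofFn_cast_get]

lemma finiteD : ∀ s : Sk Sig0, Finite {dt : DT Sig0 d // DT.skel dt = s}
  | .leaf a =>
      Finite.of_injective (fun dt => DT.rootIdx dt.1) (by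
        rintro ⟨dt1, h1⟩ ⟨dt2, h2⟩ h
        apply Subtype.ext
        show dt1 = dt2
        simp only at h
        rw [eq_term_of_skel_leaf dt1 h1, eq_term_of_skel_leaf dt2 h2, h])
  | .node ts => by
      have hF : ∀ j : Fin ts.length, Finite {dt : DT Sig0 d // DT.skel dt = ts.get j} :=
        fun j => finiteD (ts.get j)
      exact Finite.of_surjective _ (buildNode_bijective ts).2
decreasing_by
  have hm : ts.get j ∈ ts := by simp
  have := List.sizeOf_lt_of_mem hm
  simp only [Sk.node.sizeOf_spec]
  omega

lemma key (μleaf : Sig0 → Fin d → ℝ) (coef : Fin d → List (Fin d) → ℝ) :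
    ∀ (s : Sk Sig0) (pick : Fin d → ℝ),
      (∑' dt : {dt : DT Sig0 d // DT.skel dt = s},
          pick (DT.rootIdx dt.1) * DT.wt μleaf coef dt.1)
        = ∑ i, pick i * Sk.eval μleaf coef s i
  | .leaf a, pick => by
      haveI : Finite {dt : DT Sig0 d // DT.skel dt = Sk.leaf a} := finiteD _
      haveI := Fintype.ofFinite {dt : DT Sig0 d // DT.skel dt = Sk.leaf a}
      have hbij : Function.Bijective
          (fun i : Fin d => (⟨DT.term i a, skel_term i a⟩ :
            {dt : DT Sig0 d // DT.skel dt = Sk.leaf a})) := by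
        constructor
        · intro i i' h
          simpa [DT.term.injEq, DT.rootIdx] using congrArg (fun x => DT.rootIdx x.1) h
        · rintro ⟨dt, h⟩
          exact ⟨DT.rootIdx dt, Subtype.ext (eq_term_of_skel_leaf dt h).symm⟩
      rw [tsum_fintype]
      rw [← Fintype.sum_bijective _ hbij _
        (fun dt => pick (DT.rootIdx dt.1) * DT.wt μleaf coef dt.1) (fun i => rfl)]
      refine Finset.sum_congr rfl fun i _ => ?_
      show pick (DT.rootIdx (DT.term i a)) * DT.wt μleaf coef (DT.term i a)
        = pick i * Sk.eval μleaf coef (Sk.leaf a) i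
      rw [DT.wt, Sk.eval, DT.rootIdx]
  | .node ts, pick => by
      haveI : ∀ j : Fin ts.length, Finite {dt : DT Sig0 d // DT.skel dt = ts.get j} :=
        fun j => finiteD (ts.get j)
      haveI : ∀ j : Fin ts.length, Fintype {dt : DT Sig0 d // DT.skel dt = ts.get j} :=
        fun j => Fintype.ofFinite _
      haveI : Finite {dt : DT Sig0 d // DT.skel dt = Sk.node ts} := finiteD _
      haveI := Fintype.ofFinite {dt : DT Sig0 d // DT.skel dt = Sk.node ts}
      rw [tsum_fintype]
      rw [← Fintype.sum_bijective _ (buildNode_bijective (d := d) ts) _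
        (fun dt => pick (DT.rootIdx dt.1) * DT.wt μleaf coef dt.1) (fun p => rfl)]
      have hIH : ∀ (j : Fin ts.length) (k : Fin d),
          Sk.eval μleaf coef (ts.get j) k
            = ∑ dt : {dt : DT Sig0 d // DT.skel dt = ts.get j},
                (if DT.rootIdx dt.1 = k then (1:ℝ) else 0) * DT.wt μleaf coef dt.1 := by
        intro j k
        rw [← tsum_fintype (L := SummationFilter.unconditional _),
          key μleaf coef (ts.get j) (fun x => if x = k then (1:ℝ) else 0)]
        simp [Finset.sum_ite_eq', eq_comm]
      -- unfold eval at the node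
      have heval : ∀ i, Sk.eval μleaf coef (Sk.node ts) i
          = ∑ g : Fin ts.length → Fin d,
              coef i (List.ofFn g) *
                ∏ j : Fin ts.length, Sk.eval μleaf coef (ts.get j) (g j) := by
        intro i; rw [Sk.eval]
      calc ∑ p : Fin d × (∀ j : Fin ts.length, {dt : DT Sig0 d // DT.skel dt = ts.get j}),
              pick (DT.rootIdx (buildNode ts p).1) * DT.wt μleaf coef (buildNode ts p).1
          = ∑ i : Fin d, ∑ f : ∀ j : Fin ts.length, {dt : DT Sig0 d // DT.skel dt = ts.get j},
              pick i * (coef i (List.ofFn fun j => DT.rootIdx (f j).1)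
                * ∏ j, DT.wt μleaf coef (f j).1) := by
            rw [Fintype.sum_prod_type]
            refine Finset.sum_congr rfl fun i _ => Finset.sum_congr rfl fun f _ => ?_
            simp only [buildNode]
            rw [wt_node, List.map_ofFn, List.map_ofFn, List.prod_ofFn, DT.rootIdx]
            rfl
        _ = ∑ i, pick i * Sk.eval μleaf coef (Sk.node ts) i := by
            refine Finset.sum_congr rfl fun i _ => ?_
            rw [heval, ← Finset.mul_sum]
            congr 1
            have step : ∀ g : Fin ts.length → Fin d,
                coef i (List.ofFn g) * ∏ j, Sk.eval μleaf coef (ts.get j) (g j)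
                  = ∑ f : ∀ j : Fin ts.length, {dt : DT Sig0 d // DT.skel dt = ts.get j},
                      coef i (List.ofFn g) *
                        ((if (fun j => DT.rootIdx (f j).1) = g then (1:ℝ) else 0)
                          * ∏ j, DT.wt μleaf coef (f j).1) := by
              intro g
              have : ∏ j, Sk.eval μleaf coef (ts.get j) (g j)
                  = ∑ f : ∀ j : Fin ts.length, {dt : DT Sig0 d // DT.skel dt = ts.get j},
                      ∏ j, ((if DT.rootIdx (f j).1 = g j then (1:ℝ) else 0)
                        * DT.wt μleaf coef (f j).1) :=
                (Finset.prod_congr rfl fun j _ => hIH j (g j)).trans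
                  (Fintype.prod_sum (fun j (dt : {dt : DT Sig0 d // DT.skel dt = ts.get j}) =>
                    (if DT.rootIdx dt.1 = g j then (1:ℝ) else 0) * DT.wt μleaf coef dt.1))
              rw [this, Finset.mul_sum]
              refine Finset.sum_congr rfl fun f _ => ?_
              congr 1
              rw [Finset.prod_mul_distrib, Fintype.prod_boole]
              congr 2
              simp [funext_iff]
            rw [Finset.sum_congr rfl fun g _ => step g, Finset.sum_comm]
            refine Finset.sum_congr rfl fun f _ => ?_
            simp only [mul_ite, mul_one, mul_zero, ite_mul, zero_mul]
            rw [Finset.sum_ite_eq Finset.univ (fun j => DT.rootIdx (f j).1)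
              (fun g => coef i (List.ofFn g) * (1 * ∏ j, DT.wt μleaf coef (f j).1))]
            simp
decreasing_by
  all_goals
    have hm : ts.get j ∈ ts := by simp
    have := List.sizeOf_lt_of_mem hm
    simp only [Sk.node.sizeOf_spec]
    omega

end Aux

theorem stmt_12 {Sig0 : Type} {d : ℕ}
    (μleaf : Sig0 → Fin d → ℝ) (coef : Fin d → List (Fin d) → ℝ)
    (lam : Fin d → ℝ)
    -- the automaton is a PMTA: all weights are nonnegative
    (hleaf : ∀ a i, 0 ≤ μleaf a i)
    (hcoef : ∀ i l, 0 ≤ coef i l)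
    (hlam : ∀ i, 0 ≤ lam i) :
    -- the grammar weight of every tree equals the automaton value λ·μ(t)
    ∀ t : Sk Sig0,
      Wgrammar μleaf coef lam t = ∑ i, lam i * Sk.eval μleaf coef t i := by
  intro t
  exact key μleaf coef t lam
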